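/- Let n ≥ 1. The map x ↦ (K_1(x), …, K_n(x)) is a bijection from the set of Dyck paths of length 2n onto the set of tuples (k_1, …, k_n) of positive integers satisfying k_{i+1} ≥ k_i − 1 for all 1 ≤ i < n and k_n = 1. -/

import Mathlib

/-- The path associated with an ordering `ω` of the `2n` socks `{1,…,n} × {0,1}`:
`x 0 = 0`, and the path steps up when a new sock type is drawn and down when the
drawn type has already occurred. -/
def sockPath (n : ℕ) (ω : Fin (2 * n) → Fin n × Bool) : ℕ → ℤ
  | 0 => 0
  | m + 1 =>
    sockPath n ω m +
      if h : m < 2 * n then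
        if ∃ i : Fin (2 * n), (i : ℕ) < m ∧ (ω i).1 = (ω ⟨m, h⟩).1 then -1 else 1
      else 0

/-- `Lseq x j` is `L_j(x)`: `L_0(x) = 0` and
`L_j(x) = min { i > L_{j-1}(x) : x (i+1) = x i - 1 }`. -/
noncomputable def Lseq (x : ℕ → ℤ) : ℕ → ℕ
  | 0 => 0
  | j + 1 => sInf {i : ℕ | Lseq x j < i ∧ x (i + 1) = x i - 1}

/-- `Kseq x j` is `K_j(x) = x (L_j(x))`. -/
noncomputable def Kseq (x : ℕ → ℤ) (j : ℕ) : ℤ := x (Lseq x j)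

/-- A Dyck path of length `2n`: a tuple `(x 1, …, x (2n))` of integers with `x 1 = 1`,
`|x (i+1) - x i| = 1` for `1 ≤ i < 2n`, `x i ≥ 0` for `1 ≤ i ≤ 2n - 1`, and `x (2n) = 0`. -/
def IsDyckPath (n : ℕ) (x : ℕ → ℤ) : Prop :=
  x 1 = 1 ∧ (∀ i, 1 ≤ i → i < 2 * n → |x (i + 1) - x i| = 1) ∧
    (∀ i, 1 ≤ i → i ≤ 2 * n - 1 → 0 ≤ x i) ∧ x (2 * n) = 0

/-- The map `x ↦ (K_1(x), …, K_n(x))` is a bijection from Dyck paths of length `2n`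
onto tuples `(k 1, …, k n)` of positive integers with `k (i+1) ≥ k i - 1` for
`1 ≤ i < n` and `k n = 1`: it maps into the set of such tuples, it is surjective onto
it, and it is injective (Dyck paths with the same `K`-tuple agree on `1, …, 2n`). -/
lemma dyck_last (n : ℕ) (hn : 1 ≤ n) (x : ℕ → ℤ) (hx : IsDyckPath n x) :
    x (2 * n - 1) = 1 ∧ x (2 * n - 1 + 1) = x (2 * n - 1) - 1 := by
  obtain ⟨h1, hstep, hpos, hend⟩ := hx
  have h2n : 2 * n - 1 + 1 = 2 * n := by omega
  have hs := hstep (2 * n - 1) (by omega) (by omega)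
  rw [h2n] at hs ⊢
  rw [hend] at hs
  have hp := hpos (2 * n - 1) (by omega) le_rfl
  have : x (2 * n - 1) = 1 := by
    rcases abs_eq (by norm_num : (0:ℤ) ≤ 1) |>.mp hs with h | h <;> omega
  exact ⟨this, by omega⟩

lemma dyck_main (n : ℕ) (hn : 1 ≤ n) (x : ℕ → ℤ) (hx : IsDyckPath n x) :
    ∀ j, 1 ≤ j → j ≤ n →
      Lseq x (j - 1) < Lseq x j ∧ Lseq x j ≤ 2 * n - 1 ∧
      x (Lseq x j + 1) = x (Lseq x j) - 1 ∧
      (Lseq x j : ℤ) + 2 = Kseq x j + 2 * j ∧ 1 ≤ Kseq x j ∧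
      (∀ i, Lseq x (j - 1) < i → i ≤ Lseq x j →
        x i = Kseq x j + (i : ℤ) - (Lseq x j : ℤ)) := by
  obtain ⟨h1, hstep, hpos, hend⟩ := hx
  have hlast : x (2 * n - 1) = 1 ∧ x (2 * n - 1 + 1) = x (2 * n - 1) - 1 :=
    dyck_last n hn x ⟨h1, hstep, hpos, hend⟩
  intro j hj
  induction j, hj using Nat.le_induction with
  | base =>
    intro _
    set S := {i : ℕ | Lseq x 0 < i ∧ x (i + 1) = x i - 1} with hS
    have hL0 : Lseq x 0 = 0 := rfl
    have hmem : 2 * n - 1 ∈ S := by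
      constructor
      · simp [hL0]; omega
      · exact hlast.2
    have hne : S.Nonempty := ⟨_, hmem⟩
    have hL1 : Lseq x 1 = sInf S := rfl
    have hLmem : Lseq x 1 ∈ S := by rw [hL1]; exact Nat.sInf_mem hne
    have hLle : Lseq x 1 ≤ 2 * n - 1 := by rw [hL1]; exact Nat.sInf_le hmem
    have hLpos : 0 < Lseq x 1 := hLmem.1
    -- x i = i for 1 ≤ i ≤ L1
    have hid : ∀ i, 1 ≤ i → i ≤ Lseq x 1 → x i = (i : ℤ) := by
      intro i hi
      induction i, hi using Nat.le_induction with
      | base => intro _; simpa using h1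
      | succ i hi ih =>
        intro hile
        have hilt : i < Lseq x 1 := by omega
        have hnot : i ∉ S := by
          rw [hL1] at hilt; exact Nat.notMem_of_lt_sInf hilt
        have hxid : x i = (i : ℤ) := ih (by omega)
        have hs := hstep i hi (by omega)
        have : x (i + 1) ≠ x i - 1 := fun h => hnot ⟨by simp [hL0]; omega, h⟩
        rcases abs_eq (by norm_num : (0:ℤ) ≤ 1) |>.mp hs with h | h
        · push_cast; omega
        · omega
    have hK : Kseq x 1 = (Lseq x 1 : ℤ) := hid _ hLpos le_rfl
    refine ⟨by simpa [hL0] using hLpos, hLle, hLmem.2, by rw [hK]; push_cast; ring,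
      by rw [hK]; exact_mod_cast hLpos, ?_⟩
    intro i hi hile
    rw [hid i (by simp [hL0] at hi; omega) hile, hK]; ring
  | succ j hj1 ih =>
    intro hjn
    obtain ⟨hprev, hjle, hjdesc, hjK, hjKpos, _⟩ := ih (by omega)
    have hLjpos : 0 < Lseq x j := by
      have := hprev; omega
    -- L j < 2n - 1
    have hjlt : Lseq x j < 2 * n - 1 := by
      rcases lt_or_eq_of_le hjle with h | h
      · exact h
      · exfalso
        have : Kseq x j = 1 := by unfold Kseq; rw [h]; exact hlast.1
        rw [this] at hjK
        have : (Lseq x j : ℤ) = 2 * n - 1 := by rw [h]; push_cast; omega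
        omega
    set S := {i : ℕ | Lseq x j < i ∧ x (i + 1) = x i - 1} with hS
    have hmem : 2 * n - 1 ∈ S := ⟨hjlt, hlast.2⟩
    have hne : S.Nonempty := ⟨_, hmem⟩
    have hL1 : Lseq x (j + 1) = sInf S := rfl
    have hLmem : Lseq x (j + 1) ∈ S := by rw [hL1]; exact Nat.sInf_mem hne
    have hLle : Lseq x (j + 1) ≤ 2 * n - 1 := by rw [hL1]; exact Nat.sInf_le hmem
    have hLgt : Lseq x j < Lseq x (j + 1) := hLmem.1
    -- run: for Lseq x j < i ≤ Lseq x (j+1), x i = Kseq x j - 1 + (i - (Lseq x j + 1))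
    have hrun : ∀ i, Lseq x j < i → i ≤ Lseq x (j + 1) →
        x i = Kseq x j + (i : ℤ) - (Lseq x j : ℤ) - 2 := by
      intro i hi
      have hi' : Lseq x j + 1 ≤ i := hi
      induction i, hi' using Nat.le_induction with
      | base =>
        intro _
        have hKdef : Kseq x j = x (Lseq x j) := rfl
        push_cast
        omega
      | succ i hi2 ih2 =>
        intro hile
        have hilt : i < Lseq x (j + 1) := by omega
        have hnot : i ∉ S := by rw [hL1] at hilt; exact Nat.notMem_of_lt_sInf hilt
        have hxid := ih2 (by omega) (by omega)
        have hs := hstep i (by omega) (by omega)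
        have : x (i + 1) ≠ x i - 1 := fun h => hnot ⟨by omega, h⟩
        rcases abs_eq (by norm_num : (0:ℤ) ≤ 1) |>.mp hs with h | h
        · push_cast; push_cast at hxid; omega
        · omega
    have hKrel : Kseq x (j + 1) = Kseq x j + (Lseq x (j + 1) : ℤ) - (Lseq x j : ℤ) - 2 :=
      hrun _ hLgt le_rfl
    have hLrel : (Lseq x (j + 1) : ℤ) + 2 = Kseq x (j + 1) + 2 * (j + 1) := by
      push_cast; push_cast at hjK; omega
    have hKpos : 1 ≤ Kseq x (j + 1) := by
      rcases lt_or_eq_of_le hLle with h | h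
      · have hp := hpos (Lseq x (j + 1) + 1) (by omega) (by omega)
        have hd := hLmem.2
        have hKdef : Kseq x (j + 1) = x (Lseq x (j + 1)) := rfl
        omega
      · have : Kseq x (j + 1) = 1 := by unfold Kseq; rw [h]; exact hlast.1
        omega
    refine ⟨by simpa using hLgt, hLle, hLmem.2, hLrel, hKpos, ?_⟩
    intro i hi hile
    have := hrun i (by simpa using hi) hile
    rw [this, hKrel]; ring

lemma part1 (n : ℕ) (hn : 1 ≤ n) (x : ℕ → ℤ) (hx : IsDyckPath n x) :
    (∀ j, 1 ≤ j → j ≤ n → 0 < Kseq x j) ∧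
    (∀ i, 1 ≤ i → i < n → Kseq x i - 1 ≤ Kseq x (i + 1)) ∧ Kseq x n = 1 := by
  have M := dyck_main n hn x hx
  refine ⟨fun j h1 h2 => (M j h1 h2).2.2.2.2.1, ?_, ?_⟩
  · intro i h1 h2
    obtain ⟨-, -, -, hKi, -, -⟩ := M i h1 (by omega)
    obtain ⟨hlt, -, -, hKi1, -, -⟩ := M (i + 1) (by omega) (by omega)
    have : i + 1 - 1 = i := by omega
    rw [this] at hlt
    push_cast at hKi1
    omega
  · obtain ⟨-, hle, -, hK, hKpos, -⟩ := M n hn le_rfl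
    push_cast at hK
    omega

lemma kn1 (n : ℕ) (hn : 1 ≤ n) (x : ℕ → ℤ) (hx : IsDyckPath n x) : Kseq x n = 1 :=
  (part1 n hn x hx).2.2

lemma part3 (n : ℕ) (hn : 1 ≤ n) (x y : ℕ → ℤ) (hx : IsDyckPath n x) (hy : IsDyckPath n y)
    (hK : ∀ j, 1 ≤ j → j ≤ n → Kseq x j = Kseq y j) :
    ∀ i, 1 ≤ i → i ≤ 2 * n → x i = y i := by
  have Mx := dyck_main n hn x hx
  have My := dyck_main n hn y hy
  have hL : ∀ j, 1 ≤ j → j ≤ n → Lseq x j = Lseq y j := by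
    intro j h1 h2
    have ex := (Mx j h1 h2).2.2.2.1
    have ey := (My j h1 h2).2.2.2.1
    rw [hK j h1 h2] at ex
    omega
  have hLn : Lseq x n = 2 * n - 1 := by
    have ex := (Mx n hn le_rfl).2.2.2.1
    have hle := (Mx n hn le_rfl).2.1
    rw [kn1 n hn x hx] at ex
    omega
  intro i hi1 hi2
  rcases eq_or_lt_of_le hi2 with rfl | hilt
  · rw [hx.2.2.2, hy.2.2.2]
  · -- i ≤ 2n - 1 = Lseq x n
    set T := {j : ℕ | 1 ≤ j ∧ j ≤ n ∧ i ≤ Lseq x j} with hT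
    have hnT : n ∈ T := ⟨hn, le_rfl, by omega⟩
    have hmne : T.Nonempty := ⟨n, hnT⟩
    set m := sInf T with hm
    obtain ⟨hm1, hmn, hmi⟩ : m ∈ T := Nat.sInf_mem hmne
    have hprevx : Lseq x (m - 1) < i := by
      rcases Nat.eq_or_lt_of_le hm1 with h | h
      · have : Lseq x 0 = 0 := rfl
        rw [← h]; simp [this]; omega
      · have hnot : m - 1 ∉ T := Nat.notMem_of_lt_sInf (by omega)
        by_contra hcon
        exact hnot ⟨by omega, by omega, by omega⟩
    have hprevy : Lseq y (m - 1) < i := by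
      rcases Nat.eq_or_lt_of_le hm1 with h | h
      · have : Lseq y 0 = 0 := rfl
        rw [← h]; simp [this]; omega
      · rw [← hL (m - 1) (by omega) (by omega)]; exact hprevx
    have rx := (Mx m hm1 hmn).2.2.2.2.2 i hprevx hmi
    have ry := (My m hm1 hmn).2.2.2.2.2 i hprevy (by rw [← hL m hm1 hmn]; exact hmi)
    rw [rx, ry, hK m hm1 hmn, hL m hm1 hmn]

lemma part2 (n : ℕ) (hn : 1 ≤ n) (k : ℕ → ℕ)
    (hkpos : ∀ i, 1 ≤ i → i ≤ n → 0 < k i)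
    (hkstep : ∀ i, 1 ≤ i → i < n → k i ≤ k (i + 1) + 1) (hkn : k n = 1) :
    ∃ x : ℕ → ℤ, IsDyckPath n x ∧ ∀ j, 1 ≤ j → j ≤ n → Kseq x j = (k j : ℤ) := by
  classical
  set l : ℕ → ℕ := fun j => k j + 2 * (j - 1) with hl
  have hadj : ∀ j, 1 ≤ j → j < n → l j < l (j + 1) := by
    intro j h1 h2
    have := hkstep j h1 h2
    simp only [hl]
    omega
  have hmono : ∀ a b, 1 ≤ a → a < b → b ≤ n → l a < l b := by
    intro a b h1 hab
    induction b, hab using Nat.le_induction with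
    | base => intro h; exact hadj a h1 (by omega)
    | succ b hb ih =>
      intro h
      exact lt_trans (ih (by omega)) (hadj b (by omega) (by omega))
  have hlb : ∀ j, 1 ≤ j → j ≤ n → 2 * j - 1 ≤ l j := by
    intro j h1 h2; have := hkpos j h1 h2; simp only [hl]; omega
  have hln : l n = 2 * n - 1 := by simp only [hl, hkn]; omega
  have hlub : ∀ j, 1 ≤ j → j ≤ n → l j ≤ 2 * n - 1 := by
    intro j h1 h2
    rcases eq_or_lt_of_le h2 with rfl | h
    · omega
    · have := hmono j n h1 h le_rfl
      omega
  set c : ℕ → ℕ := fun i => ((Finset.Icc 1 n).filter (fun j => l j < i)).card with hc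
  set x : ℕ → ℤ := fun i => (i : ℤ) - 2 * c i with hx
  -- the single-descent count
  set e : ℕ → ℕ := fun i => ((Finset.Icc 1 n).filter (fun j => l j = i)).card with he
  have hcstep : ∀ i, c (i + 1) = c i + e i := by
    intro i
    simp only [hc, he]
    have : (Finset.Icc 1 n).filter (fun j => l j < i + 1) =
        (Finset.Icc 1 n).filter (fun j => l j < i) ∪
        (Finset.Icc 1 n).filter (fun j => l j = i) := by
      rw [← Finset.filter_or]
      apply Finset.filter_congr
      intro j _
      constructor
      · intro h; omega
      · intro h; omega
    rw [this, Finset.card_union_of_disjoint]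
    rw [Finset.disjoint_left]
    intro a ha hb
    simp only [Finset.mem_filter] at ha hb
    omega
  have he1 : ∀ i, e i ≤ 1 := by
    intro i
    simp only [he]
    apply Finset.card_le_one.mpr
    intro a ha b hb
    simp only [Finset.mem_filter, Finset.mem_Icc] at ha hb
    rcases lt_trichotomy a b with h | h | h
    · exact absurd (hmono a b ha.1.1 h hb.1.2) (by omega)
    · exact h
    · exact absurd (hmono b a hb.1.1 h ha.1.2) (by omega)
  have hepos : ∀ i, (∃ j, 1 ≤ j ∧ j ≤ n ∧ l j = i) → e i = 1 := by
    intro i ⟨j, h1, h2, h3⟩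
    have : j ∈ (Finset.Icc 1 n).filter (fun j => l j = i) := by
      simp [Finset.mem_filter, Finset.mem_Icc, h1, h2, h3]
    have h4 : 1 ≤ e i := by
      simp only [he]; exact Finset.card_pos.mpr ⟨j, this⟩
    have := he1 i
    omega
  have hezero : ∀ i, (¬ ∃ j, 1 ≤ j ∧ j ≤ n ∧ l j = i) → e i = 0 := by
    intro i hni
    simp only [he]
    rw [Finset.card_eq_zero, Finset.filter_eq_empty_iff]
    intro j hj hlj
    simp only [Finset.mem_Icc] at hj
    exact hni ⟨j, hj.1, hj.2, hlj⟩
  have hdesc : ∀ i, x (i + 1) = x i - 1 ↔ ∃ j, 1 ≤ j ∧ j ≤ n ∧ l j = i := by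
    intro i
    have hcs := hcstep i
    constructor
    · intro h
      by_contra hni
      have := hezero i hni
      simp only [hx] at h
      push_cast at h
      omega
    · intro hEx
      have := hepos i hEx
      simp only [hx]
      push_cast
      omega
  have hup : ∀ i, (¬ ∃ j, 1 ≤ j ∧ j ≤ n ∧ l j = i) → x (i + 1) = x i + 1 := by
    intro i hni
    have hcs := hcstep i
    have := hezero i hni
    simp only [hx]
    push_cast
    omega
  -- Dyck path properties
  have hc1 : c 1 = 0 := by
    simp only [hc]
    rw [Finset.card_eq_zero, Finset.filter_eq_empty_iff]
    intro j hj
    simp only [Finset.mem_Icc] at hj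
    have := hkpos j hj.1 hj.2
    simp only [hl]
    omega
  have hx1 : x 1 = 1 := by simp [hx, hc1]
  have habs : ∀ i, 1 ≤ i → i < 2 * n → |x (i + 1) - x i| = 1 := by
    intro i _ _
    have hcs := hcstep i
    have h1 := he1 i
    interval_cases h : e i
    · have : x (i + 1) = x i + 1 := by simp only [hx]; push_cast; omega
      rw [this]; simp
    · have : x (i + 1) = x i - 1 := by simp only [hx]; push_cast; omega
      rw [this]; simp
  have hnonneg : ∀ i, 0 ≤ x i := by
    intro i
    have hsub : (Finset.Icc 1 n).filter (fun j => l j < i) ⊆ Finset.Icc 1 (i / 2) := by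
      intro j hj
      simp only [Finset.mem_filter, Finset.mem_Icc] at hj ⊢
      have := hlb j hj.1.1 hj.1.2
      omega
    have : c i ≤ i / 2 := by
      simp only [hc]
      calc ((Finset.Icc 1 n).filter (fun j => l j < i)).card
          ≤ (Finset.Icc 1 (i / 2)).card := Finset.card_le_card hsub
        _ = i / 2 := by rw [Nat.card_Icc]; omega
    simp only [hx]
    omega
  have hc2n : c (2 * n) = n := by
    simp only [hc]
    rw [Finset.filter_true_of_mem, Nat.card_Icc]
    · omega
    · intro j hj
      simp only [Finset.mem_Icc] at hj
      have := hlub j hj.1 hj.2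
      omega
  have hx2n : x (2 * n) = 0 := by simp only [hx, hc2n]; push_cast; omega
  -- Lseq computation
  have hLeq : ∀ j, j ≤ n → Lseq x j = if j = 0 then 0 else l j := by
    intro j
    induction j with
    | zero => intro _; simp [Lseq]
    | succ j ih =>
      intro hjn
      have hprev := ih (by omega)
      have hL1 : Lseq x (j + 1) = sInf {i : ℕ | Lseq x j < i ∧ x (i + 1) = x i - 1} := rfl
      have hmem : l (j + 1) ∈ {i : ℕ | Lseq x j < i ∧ x (i + 1) = x i - 1} := by
        constructor
        · rw [hprev]
          rcases Nat.eq_zero_or_pos j with rfl | hj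
          · rw [if_pos rfl]
            norm_num
            have := hkpos 1 le_rfl (by omega)
            simp only [hl]
            omega
          · rw [if_neg (by omega)]
            exact hadj j hj (by omega)
        · exact (hdesc _).mpr ⟨j + 1, by omega, hjn, rfl⟩
      have hlow : ∀ i ∈ {i : ℕ | Lseq x j < i ∧ x (i + 1) = x i - 1}, l (j + 1) ≤ i := by
        intro i hi
        obtain ⟨hgt, hd⟩ := hi
        obtain ⟨j', h1, h2, h3⟩ := (hdesc i).mp hd
        rw [hprev] at hgt
        have hj' : j + 1 ≤ j' := by
          by_contra hcon
          push_neg at hcon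
          rcases Nat.eq_zero_or_pos j with rfl | hj
          · omega
          · rw [if_neg (by omega)] at hgt
            rcases eq_or_lt_of_le (by omega : j' ≤ j) with rfl | h
            · omega
            · have := hmono j' j h1 h (by omega)
              omega
        rcases eq_or_lt_of_le hj' with rfl | h
        · omega
        · have := hmono (j + 1) j' (by omega) h h2
          omega
      rw [if_neg (by omega), hL1]
      exact le_antisymm (Nat.sInf_le hmem) (hlow _ (Nat.sInf_mem ⟨_, hmem⟩))
  -- Kseq computation
  refine ⟨x, ⟨hx1, habs, fun i _ _ => hnonneg i, hx2n⟩, ?_⟩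
  intro j h1 h2
  have hLj : Lseq x j = l j := by rw [hLeq j h2, if_neg (by omega)]
  have hcl : c (l j) = j - 1 := by
    simp only [hc]
    have : (Finset.Icc 1 n).filter (fun j' => l j' < l j) = Finset.Icc 1 (j - 1) := by
      ext j'
      simp only [Finset.mem_filter, Finset.mem_Icc]
      constructor
      · rintro ⟨⟨ha, hb⟩, hlt⟩
        refine ⟨ha, ?_⟩
        by_contra hcon
        push_neg at hcon
        rcases eq_or_lt_of_le (by omega : j ≤ j') with rfl | h
        · omega
        · have := hmono j j' h1 h hb
          omega
      · rintro ⟨ha, hb⟩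
        exact ⟨⟨ha, by omega⟩, hmono j' j ha (by omega) h2⟩
    rw [this, Nat.card_Icc]
    omega
  unfold Kseq
  rw [hLj]
  simp only [hx]
  rw [hcl]
  simp only [hl]
  push_cast [Nat.sub_one]
  omega

theorem stmt_6 (n : ℕ) (hn : 1 ≤ n) :
    (∀ x : ℕ → ℤ, IsDyckPath n x →
        (∀ j, 1 ≤ j → j ≤ n → 0 < Kseq x j) ∧
        (∀ i, 1 ≤ i → i < n → Kseq x i - 1 ≤ Kseq x (i + 1)) ∧ Kseq x n = 1) ∧
    (∀ k : ℕ → ℕ, (∀ i, 1 ≤ i → i ≤ n → 0 < k i) →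
        (∀ i, 1 ≤ i → i < n → k i ≤ k (i + 1) + 1) → k n = 1 →
        ∃ x : ℕ → ℤ, IsDyckPath n x ∧ ∀ j, 1 ≤ j → j ≤ n → Kseq x j = (k j : ℤ)) ∧
    (∀ x y : ℕ → ℤ, IsDyckPath n x → IsDyckPath n y →
        (∀ j, 1 ≤ j → j ≤ n → Kseq x j = Kseq y j) →
        ∀ i, 1 ≤ i → i ≤ 2 * n → x i = y i) := by
  exact ⟨fun x hx => part1 n hn x hx, fun k h1 h2 h3 => part2 n hn k h1 h2 h3,
    fun x y hx hy hK => part3 n hn x y hx hy hK⟩
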